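/- There exists a constant C > 0 such that |J_m(t)| ≤ C · t^{−1/3} for every integer m ∈ ℤ and every real t ≥ 1. -/

import Mathlib

open MeasureTheory Complex Set intervalIntegral

lemma norm_exp_I_mul_real (x : ℝ) : ‖Complex.exp (Complex.I * x)‖ = 1 := by
  rw [Complex.norm_exp]
  simp [Complex.mul_re]

/-- trivial bound -/
lemma triv_bound (φ : ℝ → ℝ) {a b : ℝ} (hab : a ≤ b) :
    ‖∫ x in a..b, Complex.exp (Complex.I * φ x)‖ ≤ b - a := by
  have := intervalIntegral.norm_integral_le_of_norm_le_const
    (C := 1) (f := fun x => Complex.exp (Complex.I * φ x)) (a := a) (b := b)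
    (fun x _ => le_of_eq (norm_exp_I_mul_real (φ x)))
  simpa [_root_.abs_of_nonneg (sub_nonneg.2 hab)] using this

/-- conjugation trick -/
lemma norm_int_neg_phase (φ : ℝ → ℝ) (a b : ℝ) :
    ‖∫ x in a..b, Complex.exp (Complex.I * (-φ x : ℝ))‖
      = ‖∫ x in a..b, Complex.exp (Complex.I * φ x)‖ := by
  have h : ∀ x : ℝ, Complex.exp (Complex.I * (-φ x : ℝ))
      = (starRingEnd ℂ) (Complex.exp (Complex.I * φ x)) := by
    intro x
    rw [← Complex.exp_conj]
    congr 1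
    simp [map_mul, Complex.conj_I]
  simp_rw [h]
  rw [intervalIntegral, intervalIntegral, integral_conj, integral_conj, ← map_sub,
    RCLike.norm_conj]

/-- First-derivative test: if `φ' ≥ μ > 0` and `φ''` has constant sign on `[a,b]`,
then `‖∫ e^{iφ}‖ ≤ 3/μ`. -/
lemma vdc1 (φ φ' φ'' : ℝ → ℝ) (a b μ : ℝ) (hab : a ≤ b) (hμ : 0 < μ)
    (hd : ∀ x, HasDerivAt φ (φ' x) x) (hd' : ∀ x, HasDerivAt φ' (φ'' x) x)
    (hc'' : Continuous φ'')
    (hlow : ∀ x ∈ Set.Icc a b, μ ≤ φ' x)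
    (hsgn : (∀ x ∈ Set.Icc a b, 0 ≤ φ'' x) ∨ (∀ x ∈ Set.Icc a b, φ'' x ≤ 0)) :
    ‖∫ x in a..b, Complex.exp (Complex.I * φ x)‖ ≤ 3 / μ := by
  have hc' : Continuous φ' := continuous_iff_continuousAt.2 fun x => (hd' x).continuousAt
  have hcφ : Continuous φ := continuous_iff_continuousAt.2 fun x => (hd x).continuousAt
  have huIcc : Set.uIcc a b = Set.Icc a b := Set.uIcc_of_le hab
  have hpos : ∀ x ∈ Set.Icc a b, 0 < φ' x := fun x hx => lt_of_lt_of_le hμ (hlow x hx)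
  have hne : ∀ x ∈ Set.Icc a b, (φ' x : ℂ) ≠ 0 := fun x hx => by
    exact_mod_cast Complex.ofReal_ne_zero.2 (ne_of_gt (hpos x hx))
  set f : ℝ → ℂ := fun x => Complex.exp (Complex.I * φ x) with hf
  set h : ℝ → ℂ := fun x => Complex.I * (φ'' x : ℂ) / ((φ' x : ℂ))^2 with hh
  set g : ℝ → ℂ := fun x => Complex.exp (Complex.I * φ x) / (Complex.I * φ' x) with hg
  -- derivative of f
  have hdf : ∀ x : ℝ, HasDerivAt f (Complex.I * φ' x * f x) x := by
    intro x
    have h1 : HasDerivAt (fun y : ℝ => ((φ y : ℝ) : ℂ)) ((φ' x : ℝ) : ℂ) x :=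
      (hd x).ofReal_comp
    have h2 : HasDerivAt (fun y : ℝ => Complex.I * (φ y : ℂ)) (Complex.I * (φ' x : ℂ)) x :=
      h1.const_mul Complex.I
    simpa [hf, mul_comm] using h2.cexp
  -- derivative of g
  have hdg : ∀ x ∈ Set.Icc a b, HasDerivAt g (f x + f x * h x) x := by
    intro x hx
    have h1 : HasDerivAt (fun y : ℝ => ((φ' y : ℝ) : ℂ)) ((φ'' x : ℝ) : ℂ) x :=
      (hd' x).ofReal_comp
    have h2 : HasDerivAt (fun y : ℝ => Complex.I * (φ' y : ℂ)) (Complex.I * (φ'' x : ℂ)) x :=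
      h1.const_mul Complex.I
    have hne2 : Complex.I * (φ' x : ℂ) ≠ 0 :=
      mul_ne_zero Complex.I_ne_zero (hne x hx)
    have h4 := (hdf x).div h2 hne2
    refine h4.congr_deriv ?_
    have e2 : (φ' x : ℂ) * ((φ' x : ℂ))⁻¹ = 1 := mul_inv_cancel₀ (hne x hx)
    simp only [hh, hf, mul_pow, Complex.I_sq]
    field_simp
    linear_combination (-((φ' x : ℂ) * ((φ' x : ℂ))⁻¹) ^ 2) * Complex.I_sq
      + ((φ' x : ℂ) * ((φ' x : ℂ))⁻¹ + 1) * e2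
  -- integrability
  have hcf : Continuous f := by
    apply Complex.continuous_exp.comp
    exact continuous_const.mul (Complex.continuous_ofReal.comp hcφ)
  have hif : IntervalIntegrable f volume a b := hcf.intervalIntegrable a b
  have hcfh : ContinuousOn (fun x => f x * h x) (Set.Icc a b) := by
    apply hcf.continuousOn.mul
    apply ContinuousOn.div
    · exact (continuous_const.mul (Complex.continuous_ofReal.comp hc'')).continuousOn
    · exact ((Complex.continuous_ofReal.comp hc').pow 2).continuousOn
    · intro x hx
      exact pow_ne_zero 2 (hne x hx)
  have hifh : IntervalIntegrable (fun x => f x * h x) volume a b := by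
    rw [intervalIntegrable_iff_integrableOn_Icc_of_le hab]
    exact hcfh.integrableOn_Icc
  -- FTC
  have hftc : ∫ x in a..b, (f x + f x * h x) = g b - g a := by
    apply intervalIntegral.integral_eq_sub_of_hasDerivAt
    · intro x hx; exact hdg x (huIcc ▸ hx)
    · exact hif.add hifh
  have hsplit : ∫ x in a..b, f x = (g b - g a) - ∫ x in a..b, f x * h x := by
    rw [← hftc, intervalIntegral.integral_add hif hifh]; ring
  -- norm of g
  have hng : ∀ x ∈ Set.Icc a b, ‖g x‖ ≤ 1 / μ := by
    intro x hx
    show ‖Complex.exp (Complex.I * φ x) / (Complex.I * φ' x)‖ ≤ 1 / μ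
    rw [norm_div, norm_exp_I_mul_real, norm_mul,
      Complex.norm_I, Complex.norm_real, one_mul, Real.norm_eq_abs, abs_of_pos (hpos x hx)]
    exact one_div_le_one_div_of_le hμ (hlow x hx)
  -- norm of the remainder integral
  have hnorm_fh : ∀ x ∈ Set.Icc a b, ‖f x * h x‖ = |φ'' x| / (φ' x)^2 := by
    intro x hx
    rw [norm_mul, hf, norm_exp_I_mul_real, one_mul, hh]
    rw [norm_div, norm_mul,
      Complex.norm_I, Complex.norm_real, Real.norm_eq_abs, one_mul]
    congr 1
    rw [← Complex.ofReal_pow, Complex.norm_real, Real.norm_eq_abs, abs_of_pos (pow_pos (hpos x hx) 2)]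
  have hGder : ∀ x ∈ Set.Icc a b, HasDerivAt (fun y => -(φ' y)⁻¹) (φ'' x / (φ' x)^2) x := by
    intro x hx
    have := ((hd' x).inv (ne_of_gt (hpos x hx))).neg
    exact this.congr_deriv (by ring)
  have hiG : IntervalIntegrable (fun x => φ'' x / (φ' x)^2) volume a b := by
    rw [intervalIntegrable_iff_integrableOn_Icc_of_le hab]
    apply ContinuousOn.integrableOn_Icc
    apply hc''.continuousOn.div ((hc'.pow 2).continuousOn)
    intro x hx; exact pow_ne_zero 2 (ne_of_gt (hpos x hx))
  have hGftc : ∫ x in a..b, φ'' x / (φ' x)^2 = (φ' a)⁻¹ - (φ' b)⁻¹ := by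
    rw [intervalIntegral.integral_eq_sub_of_hasDerivAt (fun x hx => hGder x (huIcc ▸ hx)) hiG]
    ring
  have hbound_int : ∫ x in a..b, |φ'' x| / (φ' x)^2 ≤ 1 / μ := by
    rcases hsgn with hs | hs
    · have : ∫ x in a..b, |φ'' x| / (φ' x)^2 = ∫ x in a..b, φ'' x / (φ' x)^2 := by
        apply intervalIntegral.integral_congr
        intro x hx
        rw [huIcc] at hx
        show |φ'' x| / (φ' x)^2 = φ'' x / (φ' x)^2
        rw [_root_.abs_of_nonneg (hs x hx)]
      rw [this, hGftc]
      have h1 : (φ' a)⁻¹ ≤ 1 / μ := by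
        rw [one_div]
        exact inv_anti₀ hμ (hlow a ⟨le_refl a, hab⟩)
      have h2 : 0 < (φ' b)⁻¹ := inv_pos.2 (hpos b ⟨hab, le_refl b⟩)
      linarith
    · have : ∫ x in a..b, |φ'' x| / (φ' x)^2 = ∫ x in a..b, -(φ'' x / (φ' x)^2) := by
        apply intervalIntegral.integral_congr
        intro x hx
        rw [huIcc] at hx
        show |φ'' x| / (φ' x)^2 = -(φ'' x / (φ' x)^2)
        rw [abs_of_nonpos (hs x hx)]
        ring
      rw [this, intervalIntegral.integral_neg, hGftc]
      have h1 : (φ' b)⁻¹ ≤ 1 / μ := by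
        rw [one_div]
        exact inv_anti₀ hμ (hlow b ⟨hab, le_refl b⟩)
      have h2 : 0 < (φ' a)⁻¹ := inv_pos.2 (hpos a ⟨le_refl a, hab⟩)
      linarith
  have hrem : ‖∫ x in a..b, f x * h x‖ ≤ 1 / μ := by
    calc ‖∫ x in a..b, f x * h x‖ ≤ ∫ x in a..b, ‖f x * h x‖ :=
          intervalIntegral.norm_integral_le_integral_norm hab
      _ = ∫ x in a..b, |φ'' x| / (φ' x)^2 := by
          apply intervalIntegral.integral_congr
          intro x hx
          rw [huIcc] at hx
          exact hnorm_fh x hx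
      _ ≤ 1 / μ := hbound_int
  calc ‖∫ x in a..b, f x‖ = ‖(g b - g a) - ∫ x in a..b, f x * h x‖ := by rw [hsplit]
    _ ≤ ‖g b - g a‖ + ‖∫ x in a..b, f x * h x‖ := norm_sub_le _ _
    _ ≤ (‖g b‖ + ‖g a‖) + ‖∫ x in a..b, f x * h x‖ := by
        have := norm_sub_le (g b) (g a); linarith
    _ ≤ (1/μ + 1/μ) + 1/μ := by
        have h1 := hng b ⟨hab, le_refl b⟩
        have h2 := hng a ⟨le_refl a, hab⟩
        linarith
    _ = 3 / μ := by ring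

/-- Mirrored first-derivative test: `φ' ≤ -μ`. -/
lemma vdc1' (φ φ' φ'' : ℝ → ℝ) (a b μ : ℝ) (hab : a ≤ b) (hμ : 0 < μ)
    (hd : ∀ x, HasDerivAt φ (φ' x) x) (hd' : ∀ x, HasDerivAt φ' (φ'' x) x)
    (hc'' : Continuous φ'')
    (hlow : ∀ x ∈ Set.Icc a b, φ' x ≤ -μ)
    (hsgn : (∀ x ∈ Set.Icc a b, 0 ≤ φ'' x) ∨ (∀ x ∈ Set.Icc a b, φ'' x ≤ 0)) :
    ‖∫ x in a..b, Complex.exp (Complex.I * φ x)‖ ≤ 3 / μ := by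
  rw [← norm_int_neg_phase]
  have := vdc1 (fun x => -φ x) (fun x => -φ' x) (fun x => -φ'' x) a b μ hab hμ
    (fun x => (hd x).neg) (fun x => (hd' x).neg) hc''.neg
    (fun x hx => by have := hlow x hx; linarith)
    (by rcases hsgn with hs | hs
        · exact Or.inr (fun x hx => by have := hs x hx; linarith)
        · exact Or.inl (fun x hx => by have := hs x hx; linarith))
  simpa using this

/-- Second-derivative test (van der Corput): `φ'' ≥ lam > 0` gives `‖∫ e^{iφ}‖ ≤ 8/√lam`. -/
lemma vdc2 (φ φ' φ'' : ℝ → ℝ) (a b lam : ℝ) (hab : a ≤ b) (hlam : 0 < lam)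
    (hd : ∀ x, HasDerivAt φ (φ' x) x) (hd' : ∀ x, HasDerivAt φ' (φ'' x) x)
    (hc'' : Continuous φ'')
    (hlow : ∀ x ∈ Set.Icc a b, lam ≤ φ'' x) :
    ‖∫ x in a..b, Complex.exp (Complex.I * φ x)‖ ≤ 8 / Real.sqrt lam := by
  have hc' : Continuous φ' := continuous_iff_continuousAt.2 fun x => (hd' x).continuousAt
  set s := Real.sqrt lam with hs
  have hspos : 0 < s := Real.sqrt_pos.2 hlam
  have hs2 : s ^ 2 = lam := Real.sq_sqrt hlam.le
  -- φ' is monotone on [a,b]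
  have hmono : StrictMonoOn φ' (Set.Icc a b) := by
    apply strictMonoOn_of_deriv_pos (convex_Icc a b) hc'.continuousOn
    intro x hx
    rw [(hd' x).deriv]
    rw [interior_Icc] at hx
    exact lt_of_lt_of_le hlam (hlow x ⟨hx.1.le, hx.2.le⟩)
  -- mean value bound: lam * (d - c) ≤ φ' d - φ' c for c ≤ d in [a,b]
  have hmvt : ∀ c ∈ Set.Icc a b, ∀ d ∈ Set.Icc a b, c ≤ d →
      lam * (d - c) ≤ φ' d - φ' c := by
    intro c hc d hdm hcd
    have hmo : MonotoneOn (fun x => φ' x - lam * x) (Set.Icc a b) := by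
      have hder : ∀ x : ℝ, HasDerivAt (fun x => φ' x - lam * x) (φ'' x - lam) x := by
        intro x
        have h0 : HasDerivAt (fun y : ℝ => lam * y) lam x := by
          simpa using (hasDerivAt_id x).const_mul lam
        exact (hd' x).sub h0
      apply monotoneOn_of_deriv_nonneg (convex_Icc a b)
      · exact (hc'.sub (continuous_const.mul continuous_id)).continuousOn
      · intro x _
        exact (hder x).differentiableAt.differentiableWithinAt
      · intro x hx
        rw [(hder x).deriv]
        rw [interior_Icc] at hx
        have := hlow x ⟨hx.1.le, hx.2.le⟩
        linarith
    have := hmo hc hdm hcd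
    simp only at this
    linarith
  -- integrability of the oscillatory factor
  have hcφ : Continuous φ := continuous_iff_continuousAt.2 fun x => (hd x).continuousAt
  have hcf : Continuous (fun x => Complex.exp (Complex.I * φ x)) := by
    apply Complex.continuous_exp.comp
    exact continuous_const.mul (Complex.continuous_ofReal.comp hcφ)
  have hint : ∀ u v : ℝ, IntervalIntegrable (fun x => Complex.exp (Complex.I * φ x)) volume u v :=
    fun u v => hcf.intervalIntegrable u v
  -- whole-interval cases
  by_cases hA : φ' b ≤ -s
  · have h3 := vdc1' φ φ' φ'' a b s hab hspos hd hd' hc''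
      (fun x hx => le_trans (hmono.monotoneOn hx ⟨hab, le_refl b⟩ hx.2) hA)
      (Or.inl (fun x hx => le_trans hlam.le (hlow x hx)))
    calc ‖∫ x in a..b, Complex.exp (Complex.I * φ x)‖ ≤ 3 / s := h3
      _ ≤ 8 / s := by gcongr; norm_num
  by_cases hB : s ≤ φ' a
  · have h3 := vdc1 φ φ' φ'' a b s hab hspos hd hd' hc''
      (fun x hx => le_trans hB (hmono.monotoneOn ⟨le_refl a, hab⟩ hx hx.1))
      (Or.inl (fun x hx => le_trans hlam.le (hlow x hx)))
    calc ‖∫ x in a..b, Complex.exp (Complex.I * φ x)‖ ≤ 3 / s := h3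
      _ ≤ 8 / s := by gcongr; norm_num
  push_neg at hA hB
  -- get the splitting point c
  have hgetc : ∃ c ∈ Set.Icc a b, ‖∫ x in a..c, Complex.exp (Complex.I * φ x)‖ ≤ 3 / s ∧
      (-s ≤ φ' c) ∧ (φ' c = -s ∨ c = a) := by
    by_cases hca : -s ≤ φ' a
    · exact ⟨a, ⟨le_refl a, hab⟩, by simp [hspos.le]; positivity, hca, Or.inr rfl⟩
    · push_neg at hca
      have : -s ∈ Set.Icc (φ' a) (φ' b) := ⟨hca.le, hA.le⟩
      obtain ⟨c, hcmem, hcval⟩ := intermediate_value_Icc hab hc'.continuousOn this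
      refine ⟨c, hcmem, ?_, le_of_eq hcval.symm, Or.inl hcval⟩
      apply vdc1' φ φ' φ'' a c s hcmem.1 hspos hd hd' hc''
        (fun x hx => ?_)
        (Or.inl (fun x hx => le_trans hlam.le
          (hlow x ⟨hx.1, le_trans hx.2 hcmem.2⟩)))
      rw [← hcval]
      exact hmono.monotoneOn ⟨hx.1, le_trans hx.2 hcmem.2⟩ hcmem hx.2
  -- get the splitting point d
  have hgetd : ∃ d ∈ Set.Icc a b, ‖∫ x in d..b, Complex.exp (Complex.I * φ x)‖ ≤ 3 / s ∧
      (φ' d ≤ s) ∧ (φ' d = s ∨ d = b) := by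
    by_cases hdb : φ' b ≤ s
    · exact ⟨b, ⟨hab, le_refl b⟩, by simp [hspos.le]; positivity, hdb, Or.inr rfl⟩
    · push_neg at hdb
      have : s ∈ Set.Icc (φ' a) (φ' b) := ⟨hB.le, hdb.le⟩
      obtain ⟨d, hdmem, hdval⟩ := intermediate_value_Icc hab hc'.continuousOn this
      refine ⟨d, hdmem, ?_, le_of_eq hdval, Or.inl hdval⟩
      apply vdc1 φ φ' φ'' d b s hdmem.2 hspos hd hd' hc''
        (fun x hx => ?_)
        (Or.inl (fun x hx => le_trans hlam.le
          (hlow x ⟨le_trans hdmem.1 hx.1, hx.2⟩)))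
      rw [← hdval]
      exact hmono.monotoneOn hdmem ⟨le_trans hdmem.1 hx.1, hx.2⟩ hx.1
  obtain ⟨c, hcmem, hcint, hcge, hcalt⟩ := hgetc
  obtain ⟨d, hdmem, hdint, hdle, hdalt⟩ := hgetd
  -- c ≤ d
  have hcd : c ≤ d := by
    rcases hcalt with hcv | rfl
    · rcases hdalt with hdv | rfl
      · by_contra hcon
        push_neg at hcon
        have := hmono hdmem hcmem hcon
        rw [hcv, hdv] at this
        linarith
      · exact hcmem.2
    · exact hdmem.1
  -- middle bound
  have hmid : ‖∫ x in c..d, Complex.exp (Complex.I * φ x)‖ ≤ 2 / s := by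
    have hlen : d - c ≤ 2 / s := by
      have h1 := hmvt c hcmem d hdmem hcd
      have h2 : φ' d - φ' c ≤ 2 * s := by linarith
      rw [le_div_iff₀ hspos]
      nlinarith [h1, h2, hs2, hspos]
    calc ‖∫ x in c..d, Complex.exp (Complex.I * φ x)‖ ≤ d - c := triv_bound φ hcd
      _ ≤ 2 / s := hlen
  -- combine
  have hsplit : ∫ x in a..b, Complex.exp (Complex.I * φ x) =
      (∫ x in a..c, Complex.exp (Complex.I * φ x)) +
      (∫ x in c..d, Complex.exp (Complex.I * φ x)) +
      (∫ x in d..b, Complex.exp (Complex.I * φ x)) := by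
    rw [intervalIntegral.integral_add_adjacent_intervals (hint a c) (hint c d),
      intervalIntegral.integral_add_adjacent_intervals (hint a d) (hint d b)]
  rw [hsplit]
  calc ‖_ + _ + _‖ ≤ ‖(∫ x in a..c, Complex.exp (Complex.I * φ x)) +
        (∫ x in c..d, Complex.exp (Complex.I * φ x))‖ +
        ‖∫ x in d..b, Complex.exp (Complex.I * φ x)‖ := norm_add_le _ _
    _ ≤ ‖∫ x in a..c, Complex.exp (Complex.I * φ x)‖ +
        ‖∫ x in c..d, Complex.exp (Complex.I * φ x)‖ +
        ‖∫ x in d..b, Complex.exp (Complex.I * φ x)‖ := by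
          have := norm_add_le (∫ x in a..c, Complex.exp (Complex.I * φ x))
            (∫ x in c..d, Complex.exp (Complex.I * φ x))
          linarith
    _ ≤ 3 / s + 2 / s + 3 / s := by linarith
    _ = 8 / s := by ring

lemma sin_ge_sin_of_mem {δ k : ℝ} (hδ0 : 0 ≤ δ) (hδ : δ ≤ Real.pi/2) (h1 : δ ≤ k)
    (h2 : k ≤ Real.pi - δ) : Real.sin δ ≤ Real.sin k := by
  have hπ := Real.pi_pos
  rcases le_or_gt k (Real.pi/2) with h | h
  · exact Real.strictMonoOn_sin.monotoneOn ⟨by linarith, hδ⟩ ⟨by linarith, h⟩ h1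
  · rw [← Real.sin_pi_sub k]
    exact Real.strictMonoOn_sin.monotoneOn ⟨by linarith, hδ⟩
      ⟨by linarith, by linarith⟩ (by linarith)

/-- The Bessel function `J_m(t) = (1/2π)∫₀^{2π} e^{-imk - i t sin k} dk` for `m ∈ ℤ`. -/
noncomputable def besselJ (m : ℤ) (t : ℝ) : ℂ :=
  (1 / (2 * Real.pi)) * ∫ k in (0:ℝ)..(2 * Real.pi),
    Complex.exp (-Complex.I * m * k - Complex.I * t * Real.sin k)

/-- the phase of the Bessel integral -/
noncomputable def bphase (m : ℤ) (t : ℝ) (k : ℝ) : ℝ := -((m : ℝ) * k + t * Real.sin k)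

noncomputable def bphase' (m : ℤ) (t : ℝ) (k : ℝ) : ℝ := -((m : ℝ) + t * Real.cos k)

noncomputable def bphase'' (m : ℤ) (t : ℝ) (k : ℝ) : ℝ := t * Real.sin k

variable (m : ℤ) (t : ℝ)

lemma bphase_hasDeriv : ∀ x, HasDerivAt (bphase m t) (bphase' m t x) x := by
  intro x
  unfold bphase bphase'
  have h1 : HasDerivAt (fun k : ℝ => (m : ℝ) * k) (m : ℝ) x := by
    simpa using (hasDerivAt_id x).const_mul (m : ℝ)
  exact (h1.add ((Real.hasDerivAt_sin x).const_mul t)).neg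

lemma bphase'_hasDeriv : ∀ x, HasDerivAt (bphase' m t) (bphase'' m t x) x := by
  intro x
  unfold bphase' bphase''
  have h1 : HasDerivAt (fun k : ℝ => (m : ℝ) + t * Real.cos k) (t * (-Real.sin x)) x :=
    (((Real.hasDerivAt_cos x).const_mul t).const_add (m : ℝ))
  exact h1.neg.congr_deriv (by ring)

lemma bphase''_cont : Continuous (bphase'' m t) := by
  unfold bphase''
  exact continuous_const.mul Real.continuous_sin

lemma bphase_neg_hasDeriv : ∀ x, HasDerivAt (fun k => -bphase m t k) (-bphase' m t x) x :=
  fun x => (bphase_hasDeriv m t x).neg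

lemma bphase'_neg_hasDeriv : ∀ x, HasDerivAt (fun k => -bphase' m t k) (-bphase'' m t x) x :=
  fun x => (bphase'_hasDeriv m t x).neg

/-- the integrand of besselJ is `exp (I * bphase)` -/
lemma besselJ_exp_arg (k : ℝ) : (-Complex.I * (m : ℂ) * (k : ℂ) - Complex.I * (t : ℂ) * (Real.sin k : ℂ))
    = Complex.I * ((bphase m t k : ℝ) : ℂ) := by
  unfold bphase
  push_cast
  ring

lemma besselJ_eq : besselJ m t = (1 / (2 * Real.pi)) *
    ∫ k in (0:ℝ)..(2 * Real.pi), Complex.exp (Complex.I * (bphase m t k : ℝ)) := by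
  unfold besselJ
  simp_rw [besselJ_exp_arg m t]

/-- There is a constant `C > 0` with `|J_m(t)| ≤ C t^{-1/3}` for all
integers `m` and all reals `t ≥ 1`. -/
theorem statement2 :
    ∃ C : ℝ, 0 < C ∧ ∀ (m : ℤ) (t : ℝ), 1 ≤ t →
      ‖besselJ m t‖ ≤ C * t ^ (-(1/3) : ℝ) := by
  refine ⟨28, by norm_num, fun m t ht => ?_⟩
  have htpos : (0:ℝ) < t := lt_of_lt_of_le one_pos ht
  set δ : ℝ := t ^ (-(1/3) : ℝ) with hδdef
  have hδpos : 0 < δ := Real.rpow_pos_of_pos htpos _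
  have hδ1 : δ ≤ 1 := Real.rpow_le_one_of_one_le_of_nonpos ht (by norm_num)
  have hπ3 : (3:ℝ) < Real.pi := Real.pi_gt_three
  have hπ4 : Real.pi ≤ 4 := Real.pi_le_four
  have h0δ : (0:ℝ) ≤ δ := hδpos.le
  have hord0 : (0:ℝ) ≤ δ := h0δ
  have hord1 : δ ≤ Real.pi - δ := by linarith
  have hord2 : Real.pi - δ ≤ Real.pi + δ := by linarith
  have hord3 : Real.pi + δ ≤ 2*Real.pi - δ := by linarith
  have hord4 : 2*Real.pi - δ ≤ 2*Real.pi := by linarith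
  have hδ3 : t * δ^3 = 1 := by
    rw [hδdef, ← Real.rpow_natCast (t ^ (-(1/3):ℝ)) 3, ← Real.rpow_mul htpos.le]
    norm_num
    rw [Real.rpow_neg_one]
    exact mul_inv_cancel₀ (ne_of_gt htpos)
  set lam := t * Real.sin δ with hlamdef
  have hδle : δ ≤ Real.pi/2 := by linarith
  have hsinδ : 2/Real.pi * δ ≤ Real.sin δ := Real.mul_le_sin h0δ hδle
  have h2πδpos : (0:ℝ) < 2/Real.pi * δ := by positivity
  have hlampos : 0 < lam := mul_pos htpos (lt_of_lt_of_le h2πδpos hsinδ)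
  have hlamδ2 : 2/Real.pi ≤ lam * δ^2 := by
    have h1 : (2/Real.pi * δ) * (t * δ^2) ≤ Real.sin δ * (t * δ^2) :=
      mul_le_mul_of_nonneg_right hsinδ (by positivity)
    have h2 : (2/Real.pi * δ) * (t * δ^2) = 2/Real.pi * (t * δ^3) := by ring
    have h3 : Real.sin δ * (t * δ^2) = lam * δ^2 := by rw [hlamdef]; ring
    rw [h2, hδ3, mul_one] at h1
    rw [← h3]; exact h1
  have h07 : (0.7:ℝ) ≤ Real.sqrt lam * δ := by
    have h1 : Real.sqrt lam * δ = Real.sqrt (lam * δ^2) := by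
      rw [← Real.sqrt_sq h0δ, ← Real.sqrt_mul hlampos.le, Real.sqrt_sq h0δ]
    have h2 : (0.49:ℝ) ≤ lam * δ^2 := by
      refine le_trans ?_ hlamδ2
      rw [le_div_iff₀ Real.pi_pos]
      linarith
    rw [h1, show (0.7:ℝ) = Real.sqrt 0.49 by
      rw [show (0.49:ℝ) = 0.7^2 by norm_num, Real.sqrt_sq (by norm_num)]]
    exact Real.sqrt_le_sqrt h2
  have hvdc12 : 8 / Real.sqrt lam ≤ 12 * δ := by
    rw [div_le_iff₀ (Real.sqrt_pos.2 hlampos)]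
    nlinarith [h07]
  -- bounds on the five pieces
  have hI1 : ‖∫ x in (0:ℝ)..δ, Complex.exp (Complex.I * (bphase m t x : ℝ))‖ ≤ δ := by
    have := triv_bound (bphase m t) h0δ
    simpa using this
  have hI2 : ‖∫ x in δ..(Real.pi - δ), Complex.exp (Complex.I * (bphase m t x : ℝ))‖
      ≤ 8 / Real.sqrt lam := by
    apply vdc2 (bphase m t) (bphase' m t) (bphase'' m t) δ (Real.pi - δ) lam hord1 hlampos
      (bphase_hasDeriv m t) (bphase'_hasDeriv m t) (bphase''_cont m t)
    intro x hx
    unfold bphase''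
    rw [hlamdef]
    exact mul_le_mul_of_nonneg_left
      (sin_ge_sin_of_mem h0δ hδle hx.1 hx.2) htpos.le
  have hI3 : ‖∫ x in (Real.pi - δ)..(Real.pi + δ),
      Complex.exp (Complex.I * (bphase m t x : ℝ))‖ ≤ 2 * δ := by
    have := triv_bound (bphase m t) hord2
    calc _ ≤ Real.pi + δ - (Real.pi - δ) := this
      _ = 2 * δ := by ring
  have hI4 : ‖∫ x in (Real.pi + δ)..(2*Real.pi - δ),
      Complex.exp (Complex.I * (bphase m t x : ℝ))‖ ≤ 8 / Real.sqrt lam := by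
    rw [← norm_int_neg_phase (bphase m t)]
    apply vdc2 (fun k => -bphase m t k) (fun k => -bphase' m t k) (fun k => -bphase'' m t k)
      (Real.pi + δ) (2*Real.pi - δ) lam hord3 hlampos
      (bphase_neg_hasDeriv m t) (bphase'_neg_hasDeriv m t) (bphase''_cont m t).neg
    intro x hx
    have hmem1 : δ ≤ x - Real.pi := by linarith [hx.1]
    have hmem2 : x - Real.pi ≤ Real.pi - δ := by linarith [hx.2]
    have hs := sin_ge_sin_of_mem h0δ hδle hmem1 hmem2
    show lam ≤ -bphase'' m t x
    unfold bphase''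
    rw [hlamdef, show -(t * Real.sin x) = t * Real.sin (x - Real.pi) by
      rw [Real.sin_sub_pi]; ring]
    exact mul_le_mul_of_nonneg_left hs htpos.le
  have hI5 : ‖∫ x in (2*Real.pi - δ)..(2*Real.pi),
      Complex.exp (Complex.I * (bphase m t x : ℝ))‖ ≤ δ := by
    have := triv_bound (bphase m t) hord4
    calc _ ≤ 2*Real.pi - (2*Real.pi - δ) := this
      _ = δ := by ring
  -- splitting
  have hcφ : Continuous (bphase m t) :=
    continuous_iff_continuousAt.2 fun x => (bphase_hasDeriv m t x).continuousAt
  have hcf : Continuous (fun x => Complex.exp (Complex.I * (bphase m t x : ℝ))) := by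
    apply Complex.continuous_exp.comp
    exact continuous_const.mul (Complex.continuous_ofReal.comp hcφ)
  have hint : ∀ u v : ℝ,
      IntervalIntegrable (fun x => Complex.exp (Complex.I * (bphase m t x : ℝ))) volume u v :=
    fun u v => hcf.intervalIntegrable u v
  have e1 := intervalIntegral.integral_add_adjacent_intervals (hint 0 δ) (hint δ (Real.pi - δ))
  have e2 := intervalIntegral.integral_add_adjacent_intervals (hint 0 (Real.pi - δ))
    (hint (Real.pi - δ) (Real.pi + δ))
  have e3 := intervalIntegral.integral_add_adjacent_intervals (hint 0 (Real.pi + δ))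
    (hint (Real.pi + δ) (2*Real.pi - δ))
  have e4 := intervalIntegral.integral_add_adjacent_intervals (hint 0 (2*Real.pi - δ))
    (hint (2*Real.pi - δ) (2*Real.pi))
  have hnormint : ‖∫ x in (0:ℝ)..(2*Real.pi),
      Complex.exp (Complex.I * (bphase m t x : ℝ))‖ ≤ 28 * δ := by
    rw [← e4, ← e3, ← e2, ← e1]
    have n1 := norm_add_le ((((∫ x in (0:ℝ)..δ, Complex.exp (Complex.I * (bphase m t x : ℝ))) +
      ∫ x in δ..(Real.pi - δ), Complex.exp (Complex.I * (bphase m t x : ℝ))) +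
      ∫ x in (Real.pi - δ)..(Real.pi + δ), Complex.exp (Complex.I * (bphase m t x : ℝ))) +
      ∫ x in (Real.pi + δ)..(2*Real.pi - δ), Complex.exp (Complex.I * (bphase m t x : ℝ)))
      (∫ x in (2*Real.pi - δ)..(2*Real.pi), Complex.exp (Complex.I * (bphase m t x : ℝ)))
    have n2 := norm_add_le (((∫ x in (0:ℝ)..δ, Complex.exp (Complex.I * (bphase m t x : ℝ))) +
      ∫ x in δ..(Real.pi - δ), Complex.exp (Complex.I * (bphase m t x : ℝ))) +
      ∫ x in (Real.pi - δ)..(Real.pi + δ), Complex.exp (Complex.I * (bphase m t x : ℝ)))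
      (∫ x in (Real.pi + δ)..(2*Real.pi - δ), Complex.exp (Complex.I * (bphase m t x : ℝ)))
    have n3 := norm_add_le ((∫ x in (0:ℝ)..δ, Complex.exp (Complex.I * (bphase m t x : ℝ))) +
      ∫ x in δ..(Real.pi - δ), Complex.exp (Complex.I * (bphase m t x : ℝ)))
      (∫ x in (Real.pi - δ)..(Real.pi + δ), Complex.exp (Complex.I * (bphase m t x : ℝ)))
    have n4 := norm_add_le (∫ x in (0:ℝ)..δ, Complex.exp (Complex.I * (bphase m t x : ℝ)))
      (∫ x in δ..(Real.pi - δ), Complex.exp (Complex.I * (bphase m t x : ℝ)))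
    linarith [hI1, hI2, hI3, hI4, hI5, hvdc12]
  -- conclude
  rw [besselJ_eq m t]
  rw [norm_mul]
  have hcoef : ‖((1 / (2 * Real.pi) : ℝ) : ℂ)‖ ≤ 1 := by
    rw [Complex.norm_real, Real.norm_eq_abs, abs_of_pos (by positivity)]
    rw [div_le_one (by positivity)]
    linarith
  have h2π : ((1 : ℂ) / (2 * (Real.pi:ℂ))) = (((1 / (2 * Real.pi) : ℝ)) : ℂ) := by
    push_cast
    ring
  rw [h2π]
  calc ‖((1 / (2 * Real.pi) : ℝ) : ℂ)‖ * ‖∫ x in (0:ℝ)..(2*Real.pi),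
        Complex.exp (Complex.I * (bphase m t x : ℝ))‖
      ≤ 1 * (28 * δ) := by
        apply mul_le_mul hcoef hnormint (norm_nonneg _) (by norm_num)
    _ = 28 * δ := by ring
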